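/- Let A be an N×N real matrix with nonnegative off-diagonal entries and zero column sums, and let τ > 0. Then every entry of the matrix (I − τA)^{-1} is nonnegative. Consequently, one implicit Euler step u^{k+1} = (I − τA)^{-1} u^k maps nonnegative vectors to nonnegative vectors, for every time step τ > 0. -/
import Mathlib

open Matrix


/-- For an `N × N` real matrix `A` with nonnegative off-diagonal entries and zero
column sums, and any `τ > 0`, every entry of `(I − τA)⁻¹` is nonnegative;
consequently one implicit Euler step maps nonnegative vectors to nonnegative
vectors, for every time step `τ > 0`. -/
theorem implicit_euler_nonneg (N : ℕ) (A : Matrix (Fin N) (Fin N) ℝ)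
    (hoff : ∀ i j, i ≠ j → 0 ≤ A i j) (hsum : ∀ j, ∑ i, A i j = 0)
    (τ : ℝ) (hτ : 0 < τ) :
    (∀ i j, 0 ≤ ((1 : Matrix (Fin N) (Fin N) ℝ) - τ • A)⁻¹ i j) ∧
    (∀ u : Fin N → ℝ, (∀ i, 0 ≤ u i) →
      ∀ i, 0 ≤ ((1 : Matrix (Fin N) (Fin N) ℝ) - τ • A)⁻¹.mulVec u i) := by
  set M : Matrix (Fin N) (Fin N) ℝ := (1 : Matrix (Fin N) (Fin N) ℝ) - τ • A with hM
  have hMsum : ∀ j, ∑ i, M i j = 1 := by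
    intro j
    have : ∑ i, M i j = (∑ i, (1 : Matrix (Fin N) (Fin N) ℝ) i j) - τ * ∑ i, A i j := by
      rw [Finset.mul_sum, ← Finset.sum_sub_distrib]
      refine Finset.sum_congr rfl fun i _ => ?_
      simp [hM, Matrix.sub_apply, Matrix.smul_apply, smul_eq_mul]
    rw [this, hsum j]
    simp [Matrix.one_apply]
  have hMoff : ∀ i j, i ≠ j → M i j ≤ 0 := by
    intro i j hij
    have h1 : (1 : Matrix (Fin N) (Fin N) ℝ) i j = 0 := Matrix.one_apply_ne hij
    have := hoff i j hij
    simp only [hM, Matrix.sub_apply, Matrix.smul_apply, smul_eq_mul, h1]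
    nlinarith
  -- key lemma: solutions of Mᵀ y = c with c ≥ 0 are nonnegative
  have key : ∀ y c : Fin N → ℝ, (∀ i, 0 ≤ c i) → Mᵀ.mulVec y = c → ∀ i, 0 ≤ y i := by
    intro y c hc hyc i
    by_contra h
    push_neg at h
    obtain ⟨m, -, hm⟩ := Finset.exists_min_image Finset.univ y ⟨i, Finset.mem_univ i⟩
    have hym : y m < 0 := lt_of_le_of_lt (hm i (Finset.mem_univ i)) h
    have hcm : c m = ∑ k, M k m * y k := by
      rw [← hyc]
      simp [Matrix.mulVec, dotProduct, Matrix.transpose_apply]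
    have hle : ∑ k, M k m * y k ≤ ∑ k, M k m * y m := by
      refine Finset.sum_le_sum fun k _ => ?_
      by_cases hk : k = m
      · subst hk; exact le_rfl
      · exact mul_le_mul_of_nonpos_left (hm k (Finset.mem_univ k)) (hMoff k m hk)
    have : c m ≤ y m := by
      rw [hcm]
      calc ∑ k, M k m * y k ≤ ∑ k, M k m * y m := hle
        _ = (∑ k, M k m) * y m := by rw [Finset.sum_mul]
        _ = y m := by rw [hMsum m, one_mul]
    linarith [hc m]
  have main : ∀ i j, 0 ≤ M⁻¹ i j := by
    intro i j
    by_cases hInv : IsUnit M.det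
    · have hInvT : IsUnit Mᵀ.det := by rwa [Matrix.det_transpose]
      set y : Fin N → ℝ := (Mᵀ)⁻¹.mulVec (Pi.single i 1) with hy
      have hsolve : Mᵀ.mulVec y = Pi.single i 1 := by
        rw [hy, Matrix.mulVec_mulVec, Matrix.mul_nonsing_inv _ hInvT, Matrix.one_mulVec]
      have hynn := key y (Pi.single i 1) (fun k => by
        by_cases hk : k = i
        · subst hk; simp
        · simp [Pi.single_apply, hk]) hsolve j
      have hyj : y j = M⁻¹ i j := by
        rw [hy]
        simp only [Matrix.mulVec, dotProduct, Pi.single_apply]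
        rw [Finset.sum_eq_single i (fun b _ hb => by simp [hb]) (by simp)]
        rw [if_pos rfl, mul_one, show Mᵀ⁻¹ = (M⁻¹)ᵀ from (Matrix.transpose_nonsing_inv M).symm,
          Matrix.transpose_apply]
      rwa [hyj] at hynn
    · rw [Matrix.nonsing_inv_apply_not_isUnit M hInv]
      simp
  refine ⟨main, fun u hu i => ?_⟩
  simp only [Matrix.mulVec, dotProduct]
  exact Finset.sum_nonneg fun j _ => mul_nonneg (main i j) (hu j)
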